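/- arXiv:1508.00118 — 5 statements merged into one kernel-verified Lean document; each statement's English description precedes it below -/
import Mathlib

section
/- Let A be an algebra over a field F of characteristic zero, graded by a finite integral domain B, with the 0-component A_0 anticommutative in the sense that xy = -yx for all x,y in A_0. Let H be a nonzero subalgebra of A_0 such that A decomposes as the direct sum of simultaneous eigenspaces A^α = {x ∈ A : hx = α(h)x for all h ∈ H} over α ∈ H*. Then H is abelian: hh' = 0 for all h, h' ∈ H. -/
/-- The simultaneous eigenspace (root space) `A^α = {x : A | h·x = α(h)·x for all h ∈ H}`
attached to a linear functional `α` on a subspace `H` of `A`. -/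
def rootSpace {F A : Type*} [Field F] [NonUnitalNonAssocRing A] [Module F A]
    [SMulCommClass F A A] [IsScalarTower F A A]
    (H : Submodule F A) (α : Module.Dual F H) : Submodule F A where
  carrier := {x : A | ∀ h : H, (h : A) * x = α h • x}
  add_mem' := by
    intro a b ha hb h
    rw [mul_add, ha h, hb h, smul_add]
  zero_mem' := by
    intro h
    simp
  smul_mem' := by
    intro c x hx h
    rw [mul_smul_comm, hx h, smul_comm]

/-- Auxiliary: if a finitely indexed family of elements, each lying in its own submodule of an
internally-direct family, sums to zero, then each element is zero. -/
theorem aux_components_zero {F A : Type*} [Field F] [AddCommGroup A] [Module F A]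
    {ι : Type*} [DecidableEq ι] (p : ι → Submodule F A)
    (hp : DirectSum.IsInternal p) (s : Finset ι) (t : ι → A) (ht : ∀ α ∈ s, t α ∈ p α)
    (hsum : ∑ α ∈ s, t α = 0) : ∀ α ∈ s, t α = 0 := by
  classical
  set d : DirectSum ι (fun α => p α) := ∑ α ∈ s.attach, DirectSum.of (fun α => p α) α ⟨t α, ht α α.2⟩ with hd
  have hcoe : DirectSum.coeAddMonoidHom p d = 0 := by
    rw [hd, map_sum]
    simp only [DirectSum.coeAddMonoidHom_of]
    rwa [Finset.sum_attach s (fun α => t α)]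
  have hd0 : d = 0 := hp.injective (by simpa using hcoe)
  intro α₀ hα₀
  have := DFunLike.congr_fun hd0 α₀
  rw [hd, DFinsupp.finset_sum_apply] at this
  rw [Finset.sum_eq_single_of_mem (⟨α₀, hα₀⟩ : {x // x ∈ s}) (Finset.mem_attach _ _)] at this
  · have h2 := congrArg Subtype.val this
    simp only [DirectSum.of_eq_same] at h2
    exact h2
  · intro b _ hb
    exact DirectSum.of_eq_of_ne _ _ _ (fun h => hb (Subtype.ext h.symm))

/-- Let `A` be an algebra over a field of characteristic zero graded by a
finite integral domain `B`, with anticommutative `0`-component, and let `H` be a nonzero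
subalgebra of `A₀` such that `A` is the direct sum of the simultaneous eigenspaces `A^α`,
`α ∈ H*`.  Then `H` is abelian: all products of elements of `H` vanish. -/
theorem toral_subalgebra_abelian {F A B : Type*} [Field F] [CharZero F]
    [NonUnitalNonAssocRing A] [Module F A] [SMulCommClass F A A] [IsScalarTower F A A]
    [CommRing B] [IsDomain B] [Fintype B] [DecidableEq B]
    (𝒜 : B → Submodule F A) (hgrade : DirectSum.IsInternal 𝒜)
    (hgmul : ∀ (b b' : B) (x y : A), x ∈ 𝒜 b → y ∈ 𝒜 b' → x * y ∈ 𝒜 (b + b'))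
    (hanti0 : ∀ x ∈ 𝒜 0, ∀ y ∈ 𝒜 0, x * y = -(y * x))
    (H : Submodule F A) [DecidableEq (Module.Dual F H)] (hH0 : H ≤ 𝒜 0) (hHne : H ≠ ⊥)
    (hHmul : ∀ x ∈ H, ∀ y ∈ H, x * y ∈ H)
    (hdecomp : DirectSum.IsInternal (fun α : Module.Dual F H => rootSpace H α)) :
    ∀ h ∈ H, ∀ h' ∈ H, h * h' = 0 := by
  intro h hh h' hh'
  -- squares of elements of H vanish
  have hsq : ∀ a ∈ H, a * a = 0 := by
    intro a ha
    have h1 : a * a = -(a * a) := hanti0 a (hH0 ha) a (hH0 ha)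
    have h2 : (2 : F) • (a * a) = 0 := by
      rw [two_smul]
      linear_combination (norm := abel) h1
    exact (smul_eq_zero.mp h2).resolve_left two_ne_zero
  have hac : h * h' = -(h' * h) := hanti0 h (hH0 hh) h' (hH0 hh')
  -- decompose h and h' in root spaces
  obtain ⟨ch, hch⟩ := hdecomp.surjective h
  obtain ⟨ch', hch'⟩ := hdecomp.surjective h'
  classical
  set s : Finset (Module.Dual F H) := ch.support ∪ ch'.support with hs
  have hsumh : ∑ α ∈ s, ((ch α : A)) = h := by
    rw [← hch]
    rw [← DirectSum.sum_support_of ch, map_sum]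
    simp only [DirectSum.coeAddMonoidHom_of]
    rw [DirectSum.sum_support_of]
    refine (Finset.sum_subset Finset.subset_union_left ?_).symm
    intro x _ hx
    simp [DFinsupp.notMem_support_iff.mp hx]
  have hsumh' : ∑ α ∈ s, ((ch' α : A)) = h' := by
    rw [← hch']
    rw [← DirectSum.sum_support_of ch', map_sum]
    simp only [DirectSum.coeAddMonoidHom_of]
    rw [DirectSum.sum_support_of]
    refine (Finset.sum_subset Finset.subset_union_right ?_).symm
    intro x _ hx
    simp [DFinsupp.notMem_support_iff.mp hx]
  -- how multiplication by elements of H acts on components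
  have hmulh : ∀ (a : A) (ha : a ∈ H) (c : DirectSum _ fun α : Module.Dual F H => rootSpace H α)
      (α : Module.Dual F H), a * (c α : A) = α ⟨a, ha⟩ • (c α : A) := by
    intro a ha c α
    exact (c α).2 ⟨a, ha⟩
  have hmulsum : ∀ (a : A) (ha : a ∈ H)
      (c : DirectSum _ fun α : Module.Dual F H => rootSpace H α),
      a * (∑ α ∈ s, ((c α : A))) = ∑ α ∈ s, (α ⟨a, ha⟩ : F) • (c α : A) := by
    intro a ha c
    rw [Finset.mul_sum]
    exact Finset.sum_congr rfl fun α _ => hmulh a ha c α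
  -- component identities
  have P1 : ∀ α ∈ s, (α ⟨h, hh⟩ : F) • (ch α : A) = 0 := by
    refine aux_components_zero _ hdecomp s _ (fun α _ => Submodule.smul_mem _ _ (ch α).2) ?_
    have e0 : h * h = h * ∑ α ∈ s, ((ch α : A)) := by rw [hsumh]
    rw [← hmulsum h hh ch, ← e0, hsq h hh]
  have P2 : ∀ α ∈ s, (α ⟨h, hh⟩ : F) • (ch' α : A) + (α ⟨h', hh'⟩ : F) • (ch α : A) = 0 := by
    refine aux_components_zero _ hdecomp s _
      (fun α _ => Submodule.add_mem _ (Submodule.smul_mem _ _ (ch' α).2)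
        (Submodule.smul_mem _ _ (ch α).2)) ?_
    rw [Finset.sum_add_distrib]
    have e1 : ∑ α ∈ s, (α ⟨h, hh⟩ : F) • (ch' α : A) = h * h' := by
      rw [← hmulsum h hh ch', hsumh']
    have e2 : ∑ α ∈ s, (α ⟨h', hh'⟩ : F) • (ch α : A) = h' * h := by
      rw [← hmulsum h' hh' ch, hsumh]
    rw [e1, e2, hac]
    abel
  -- conclude
  have : h * h' = ∑ α ∈ s, (α ⟨h, hh⟩ : F) • (ch' α : A) := by
    rw [← hmulsum h hh ch', hsumh']
  rw [this]
  refine Finset.sum_eq_zero fun α hα => ?_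
  by_cases hz : (α ⟨h, hh⟩ : F) = 0
  · rw [hz, zero_smul]
  · have hchα : (ch α : A) = 0 := (smul_eq_zero.mp (P1 α hα)).resolve_left hz
    have := P2 α hα
    rw [hchα, smul_zero, add_zero] at this
    exact this
end

section
/- Let (A, H) be a toral pair where A satisfies xy = -yx and J(x,y,xy) = 0 (an 'extended algebra' in the sense of Sagle). Then for distinct α, β ∈ H*, the root spaces satisfy A^α A^β ⊆ A^{α+β}. -/
/-- The Jacobian. -/
def jac {A : Type*} [NonUnitalNonAssocRing A] (x y z : A) : A :=
  (x * y) * z + (z * x) * y + (y * z) * x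

/-- In a toral pair `(A, H)` where `A` is anticommutative and satisfies
`J(x,y,xy) = 0` (an extended algebra in the sense of Sagle), the root spaces satisfy
`A^α A^β ⊆ A^(α+β)` for distinct roots. -/
theorem rootSpace_mul_of_ne {F A : Type*} [Field F] [CharZero F]
    [NonUnitalNonAssocRing A] [Module F A] [SMulCommClass F A A] [IsScalarTower F A A]
    (hanti : ∀ x y : A, x * y = -(y * x))
    (hsagle : ∀ x y : A, jac x y (x * y) = 0)
    (H : Submodule F A) [DecidableEq (Module.Dual F H)] (hHne : H ≠ ⊥)
    (hHab : ∀ h ∈ H, ∀ h' ∈ H, h * h' = 0)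
    (hdecomp : DirectSum.IsInternal (fun α : Module.Dual F H => rootSpace H α))
    (h00 : ∀ x ∈ rootSpace H 0, ∀ y ∈ rootSpace H 0,
      x * y ∈ rootSpace H (0 : Module.Dual F H))
    :
    ∀ (α β : Module.Dual F H), α ≠ β →
      ∀ x ∈ rootSpace H α, ∀ y ∈ rootSpace H β, x * y ∈ rootSpace H (α + β) := by
  intro α β hαβ x hx y hy
  have hx' : ∀ h : H, (h : A) * x = α h • x := hx
  have hy' : ∀ h : H, (h : A) * y = β h • y := hy
  -- first linearization of the Sagle identity (in the first variable)
  have lin1 : ∀ p q r : A, jac p q (r * q) + jac r q (p * q) = 0 := by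
    intro p q r
    have e : jac (p + r) q ((p + r) * q)
        = jac p q (p * q) + (jac p q (r * q) + jac r q (p * q)) + jac r q (r * q) := by
      simp only [jac, add_mul, mul_add]; abel
    rw [hsagle, hsagle, hsagle] at e
    simpa using e.symm
  -- second linearization (in the second variable), specialized to r in both new slots
  have key : ∀ p q r : A,
      jac p q (r * r) + jac p r (r * q) + jac r q (p * r) + jac r r (p * q) = 0 := by
    intro p q r
    have e : jac p (q + r) (r * (q + r)) + jac r (q + r) (p * (q + r))
        = (jac p q (r * q) + jac r q (p * q)) + (jac p r (r * r) + jac r r (p * r))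
          + (jac p q (r * r) + jac p r (r * q) + jac r q (p * r) + jac r r (p * q)) := by
      simp only [jac, mul_add, add_mul]; abel
    rw [lin1 p (q + r) r, lin1 p q r, lin1 p r r] at e
    simpa using e.symm
  -- eigenvalue computation for h with β h ≠ α h
  have eig : ∀ h : H, β h - α h ≠ 0 → (h : A) * (x * y) = (α h + β h) • (x * y) := by
    intro h hba
    have hhh : (h : A) * (h : A) = 0 := hHab _ h.2 _ h.2
    have E := key x y (h : A)
    have mh : ∀ p : A, p * (h : A) = -((h : A) * p) := fun p => hanti p _
    have yx : y * x = -(x * y) := hanti y x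
    simp only [jac] at E
    rw [hhh] at E
    simp only [mh, hx' h, hy' h, yx, mul_zero, zero_mul, neg_mul, mul_neg,
      neg_neg, smul_mul_assoc, mul_smul_comm, smul_smul, smul_neg, neg_smul,
      neg_zero, zero_add, add_zero] at E
    have E2 : (β h - α h) • ((h : A) * (x * y))
        = ((β h - α h) * (β h + α h)) • (x * y) := by
      linear_combination (norm := module) E
    calc (h : A) * (x * y)
        = (β h - α h)⁻¹ • ((β h - α h) • ((h : A) * (x * y))) := by
          rw [smul_smul, inv_mul_cancel₀ hba, one_smul]
      _ = (β h - α h)⁻¹ • (((β h - α h) * (β h + α h)) • (x * y)) := by rw [E2]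
      _ = (α h + β h) • (x * y) := by
          rw [smul_smul, ← mul_assoc, inv_mul_cancel₀ hba, one_mul, add_comm]
  obtain ⟨h0, hh0⟩ : ∃ h0 : H, β h0 - α h0 ≠ 0 := by
    by_contra hc
    push_neg at hc
    exact hαβ (LinearMap.ext fun h => by
      have := hc h
      linear_combination -this)
  intro h
  show (h : A) * (x * y) = (α + β) h • (x * y)
  by_cases hc : β h - α h = 0
  · have hne' : β (h + h0) - α (h + h0) ≠ 0 := by
      simp only [map_add]
      intro e
      exact hh0 (by linear_combination e - hc)
    have e1 := eig (h + h0) hne'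
    have e2 := eig h0 hh0
    simp only [Submodule.coe_add, add_mul, map_add, LinearMap.add_apply] at e1 ⊢
    linear_combination (norm := module) e1 - e2
  · have := eig h hc
    simp only [LinearMap.add_apply]
    exact this
end

section
/- Let (A, H) be a toral pair where A is a Malcev algebra over a field of characteristic zero. Then for each α ∈ H* with α ≠ 0, A^α A^α ⊆ A^{2α} + A^{-α}. -/
lemma mem_rootSpace_iff {F A : Type*} [Field F] [NonUnitalNonAssocRing A] [Module F A]
    [SMulCommClass F A A] [IsScalarTower F A A]
    (H : Submodule F A) (α : Module.Dual F H) (x : A) :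
    x ∈ rootSpace H α ↔ ∀ h : H, (h : A) * x = α h • x := Iff.rfl

/-- Two linear functionals whose pointwise product vanishes: one must be zero. -/
lemma dual_mul_eq_zero {F M : Type*} [Field F] [AddCommGroup M] [Module F M]
    (f g : M →ₗ[F] F) (hfg : ∀ v, f v * g v = 0) : f = 0 ∨ g = 0 := by
  by_contra hc
  push_neg at hc
  obtain ⟨hf, hg⟩ := hc
  obtain ⟨a, ha⟩ : ∃ a, f a ≠ 0 := by
    by_contra h'; push_neg at h'; exact hf (LinearMap.ext fun v => h' v)
  obtain ⟨b, hb⟩ : ∃ b, g b ≠ 0 := by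
    by_contra h'; push_neg at h'; exact hg (LinearMap.ext fun v => h' v)
  have hga : g a = 0 := by
    rcases mul_eq_zero.mp (hfg a) with h1 | h1
    · exact absurd h1 ha
    · exact h1
  have hfb : f b = 0 := by
    rcases mul_eq_zero.mp (hfg b) with h1 | h1
    · exact h1
    · exact absurd h1 hb
  have := hfg (a + b)
  rw [map_add, map_add, hga, hfb, add_zero, zero_add] at this
  exact (mul_ne_zero ha hb) this

set_option maxHeartbeats 1000000
set_option synthInstance.maxHeartbeats 400000

/-- In a toral pair `(A, H)` where `A` is a Malcev algebra over a field of
characteristic zero, for every nonzero root `α` one has `A^α A^α ⊆ A^(2α) + A^(-α)`. -/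
theorem rootSpace_mul_self {F A : Type*} [Field F] [CharZero F]
    [NonUnitalNonAssocRing A] [Module F A] [SMulCommClass F A A] [IsScalarTower F A A]
    (hanti : ∀ x y : A, x * y = -(y * x))
    (hmal : ∀ x y z : A, jac x y (x * z) = (jac x y z) * x)
    (H : Submodule F A) [DecidableEq (Module.Dual F H)] (hHne : H ≠ ⊥)
    (hHab : ∀ h ∈ H, ∀ h' ∈ H, h * h' = 0)
    (hdecomp : DirectSum.IsInternal (fun α : Module.Dual F H => rootSpace H α))
    (h00 : ∀ x ∈ rootSpace H 0, ∀ y ∈ rootSpace H 0,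
      x * y ∈ rootSpace H (0 : Module.Dual F H))
    :
    ∀ (α : Module.Dual F H), α ≠ 0 →
      ∀ x ∈ rootSpace H α, ∀ y ∈ rootSpace H α,
        x * y ∈ rootSpace H ((2 : F) • α) ⊔ rootSpace H (-α) := by
  classical
  intro α hα x hx y hy
  set z : A := x * y with hzdef
  -- Step 1: the quadratic eigen-identity  h(hz) = α(h)·hz + 2α(h)²·z
  have key : ∀ h : H, (h : A) * ((h : A) * z)
      - α h • ((h : A) * z) - (α h * α h) • z - (α h * α h) • z = 0 := by
    intro h
    set a : A := (h : A) with hadef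
    have h1 : a * x = α h • x := hx h
    have h2 : a * y = α h • y := hy h
    have hJ : jac a x y = α h • z + α h • z - a * z := by
      have h3 : y * a = -(α h • y) := by rw [hanti y a, h2]
      have h4 : (x * y) * a = -(a * (x * y)) := by rw [hanti]
      have h5 : y * x = -(x * y) := hanti y x
      rw [jac, h1, h3, h4, smul_mul_assoc, neg_mul, smul_mul_assoc, h5, smul_neg, neg_neg]
      rw [← hzdef]
      abel
    have e1 : jac a x (a * y) = jac a x y * a := hmal a x y
    have e2 : jac a x (α h • y) = α h • jac a x y := by
      simp [jac, mul_smul_comm, smul_mul_assoc, smul_add]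
    have e3 : jac a x y * a = -(a * jac a x y) := hanti _ _
    have hk : α h • jac a x y = -(a * jac a x y) := by rw [← e2, ← h2, e1, e3]
    have hk' : a * jac a x y = -(α h • jac a x y) := by rw [hk, neg_neg]
    rw [hJ] at hk'
    simp only [mul_sub, mul_add, mul_smul_comm, smul_sub, smul_add, smul_smul] at hk'
    rw [eq_neg_iff_add_eq_zero] at hk'
    calc a * (a * z) - α h • (a * z) - (α h * α h) • z - (α h * α h) • z
        = -(α h • (a * z) + α h • (a * z) - a * (a * z)
            + ((α h * α h) • z + (α h * α h) • z - α h • (a * z))) := by abel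
      _ = 0 := by rw [hk', neg_zero]
  -- Step 2: decompose z along the root space decomposition
  obtain ⟨w, hw⟩ := hdecomp.surjective z
  set c : Module.Dual F H → H → F :=
    fun β h => β h * β h - α h * β h - α h * α h - α h * α h with hcdef
  have hzsum : z = ∑ β ∈ w.support, ((w β : A)) := by
    rw [← hw, DirectSum.coeAddMonoidHom_eq_dfinsuppSum]
    rfl
  have hcomp : ∀ h : H, ∀ β ∈ w.support, c β h • (w β) = 0 := by
    intro h β hβ
    set u : Π₀ β : Module.Dual F H, rootSpace H β :=
      DFinsupp.mapRange (fun β (v : rootSpace H β) => c β h • v) (fun β => smul_zero _) w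
        with hudef
    have hsum : ∑ β ∈ w.support, c β h • ((w β : A)) = 0 := by
      have hthis := key h
      rw [hzsum] at hthis
      simp only [Finset.mul_sum, Finset.smul_sum, ← Finset.sum_sub_distrib] at hthis
      rw [← hthis]
      apply Finset.sum_congr rfl
      intro γ _
      have hv : (h : A) * ((w γ : A)) = γ h • ((w γ : A)) := (w γ).2 h
      rw [hv, mul_smul_comm, hv, smul_smul, smul_smul, hcdef]
      simp only [sub_smul]
    have hgu : (DirectSum.coeAddMonoidHom fun β : Module.Dual F H => rootSpace H β) u = 0 := by
      rw [DirectSum.coeAddMonoidHom_eq_dfinsuppSum]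
      have hsub : u.support ⊆ w.support := DFinsupp.support_mapRange
      rw [DFinsupp.sum]
      rw [Finset.sum_subset hsub (by
        intro γ _ hγ'
        rw [DFinsupp.notMem_support_iff.mp hγ']
        simp)]
      rw [← hsum]
      apply Finset.sum_congr rfl
      intro γ _
      rw [hudef, DFinsupp.mapRange_apply]
      rfl
    have hu0 : u = 0 := by
      apply hdecomp.injective
      rw [hgu]
      exact (AddMonoidHom.map_zero _).symm
    have := congrArg (fun v => v β) hu0
    simpa [hudef, DFinsupp.mapRange_apply] using this
  -- Step 3: each component lies in one of the two root spaces
  rw [hzsum]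
  apply Submodule.sum_mem
  intro β hβ
  have hwβ : w β ≠ 0 := DFinsupp.mem_support_iff.mp hβ
  have hc0 : ∀ h : H, c β h = 0 := by
    intro h
    rcases smul_eq_zero.mp (hcomp h β hβ) with h' | h'
    · exact h'
    · exact absurd h' hwβ
  have hfact : ∀ h : H, (β - (2 : F) • α) h * (β + α) h = 0 := by
    intro h
    have hch := hc0 h
    simp only [hcdef] at hch
    simp only [LinearMap.sub_apply, LinearMap.add_apply, LinearMap.smul_apply, smul_eq_mul]
    linear_combination hch
  rcases dual_mul_eq_zero _ _ hfact with h' | h'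
  · have hβeq : β = (2 : F) • α := by rwa [sub_eq_zero] at h'
    apply Submodule.mem_sup_left
    rw [← hβeq]
    exact (w β).2
  · have hβeq : β = -α := eq_neg_of_add_eq_zero_left h'
    apply Submodule.mem_sup_right
    rw [← hβeq]
    exact (w β).2
end

section
/- Let A be an anticommutative algebra over a field F of characteristic zero with a symmetric invariant bilinear form, G a torsion-free abelian group, and λ: G × G → F^× a symmetric 2-cocycle. Define L(A) = A ⊗ F^t[G] with product (x ⊗ t^σ)(y ⊗ t^τ) = λ(σ,τ) (xy ⊗ t^{σ+τ}). Then L(A) is anticommutative, and if A is a Malcev algebra, then L(A) is a Malcev algebra. -/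
/-- The loop algebra product on `L(A) = A ⊗ F^t[G] ≅ (G →₀ A)`:
`(x ⊗ t^σ)(y ⊗ t^τ) = λ(σ,τ) (xy ⊗ t^{σ+τ})`. -/
noncomputable def conv {F G A : Type*} [Field F] [AddCommGroup G]
    [NonUnitalNonAssocRing A] [Module F A]
    (l : G → G → F) (f g : G →₀ A) : G →₀ A :=
  f.sum fun σ x => g.sum fun τ y => Finsupp.single (σ + τ) (l σ τ • (x * y))

set_option linter.unusedSectionVars false

section Aux

variable {F G A : Type*} [Field F] [AddCommGroup G]
    [NonUnitalNonAssocRing A] [Module F A] [SMulCommClass F A A] [IsScalarTower F A A]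
    (l : G → G → F)

lemma conv_zero_left (g : G →₀ A) : conv l 0 g = 0 := by simp [conv]

lemma conv_zero_right (f : G →₀ A) : conv l f 0 = 0 := by simp [conv]

lemma conv_add_left (f f' g : G →₀ A) :
    conv l (f + f') g = conv l f g + conv l f' g := by
  unfold conv
  rw [Finsupp.sum_add_index']
  · intro a; simp
  · intro a b₁ b₂; simp [add_mul, smul_add, Finsupp.single_add, Finsupp.sum_add]

lemma conv_add_right (f g g' : G →₀ A) :
    conv l f (g + g') = conv l f g + conv l f g' := by
  unfold conv
  rw [← Finsupp.sum_add]
  congr 1; ext σ x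
  rw [Finsupp.sum_add_index']
  · intro a; simp
  · intro a b₁ b₂; simp [mul_add, smul_add, Finsupp.single_add]

lemma conv_single_single (σ τ : G) (x y : A) :
    conv l (Finsupp.single σ x) (Finsupp.single τ y)
      = Finsupp.single (σ + τ) (l σ τ • (x * y)) := by
  unfold conv
  rw [Finsupp.sum_single_index, Finsupp.sum_single_index]
  · simp
  · simp

lemma conv_four (σ τ ρ π : G) (x y z t : A) :
    conv l (conv l (conv l (Finsupp.single σ x) (Finsupp.single τ y))
        (Finsupp.single ρ z)) (Finsupp.single π t)
      = Finsupp.single (σ + τ + ρ + π)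
          ((l σ τ * l (σ + τ) ρ * l (σ + τ + ρ) π) • (((x * y) * z) * t)) := by
  simp only [conv_single_single, smul_mul_assoc, smul_smul]
  congr 1
  ring_nf

lemma conv_pair (σ τ ρ π : G) (x y z t : A) :
    conv l (conv l (Finsupp.single σ x) (Finsupp.single ρ z))
        (conv l (Finsupp.single τ y) (Finsupp.single π t))
      = Finsupp.single (σ + ρ + (τ + π))
          ((l σ ρ * l τ π * l (σ + ρ) (τ + π)) • ((x * z) * (y * t))) := by
  simp only [conv_single_single, smul_mul_assoc, mul_smul_comm, smul_smul]
  congr 1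
  ring_nf

end Aux

section Cocycle

variable {F G : Type*} [Field F] [AddCommGroup G] (l : G → G → F)
    (hlsymm : ∀ σ τ : G, l σ τ = l τ σ)
    (hlcoc : ∀ σ τ ρ : G, l σ τ * l (σ + τ) ρ = l τ ρ * l σ (τ + ρ))
include hlsymm hlcoc

lemma h3s (σ τ ρ : G) : l σ τ * l (σ + τ) ρ = l τ σ * l (τ + σ) ρ := by
  rw [hlsymm σ τ, add_comm σ τ]

lemma h3c (σ τ ρ : G) : l σ τ * l (σ + τ) ρ = l τ ρ * l (τ + ρ) σ := by
  rw [hlcoc σ τ ρ, hlsymm σ (τ + ρ)]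

lemma h23 (σ τ ρ : G) : l σ τ * l (σ + τ) ρ = l σ ρ * l (σ + ρ) τ := by
  rw [h3c l hlsymm hlcoc σ τ ρ, h3c l hlsymm hlcoc τ ρ σ, h3s l hlsymm hlcoc ρ σ τ]

lemma s12 (σ τ ρ π : G) :
    l σ τ * l (σ + τ) ρ * l (σ + τ + ρ) π = l τ σ * l (τ + σ) ρ * l (τ + σ + ρ) π := by
  rw [h3s l hlsymm hlcoc σ τ ρ, show σ + τ + ρ = τ + σ + ρ from by abel]

lemma s23 (σ τ ρ π : G) :
    l σ τ * l (σ + τ) ρ * l (σ + τ + ρ) π = l σ ρ * l (σ + ρ) τ * l (σ + ρ + τ) π := by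
  rw [h23 l hlsymm hlcoc σ τ ρ, show σ + τ + ρ = σ + ρ + τ from by abel]

lemma s34 (σ τ ρ π : G) :
    l σ τ * l (σ + τ) ρ * l (σ + τ + ρ) π = l σ τ * l (σ + τ) π * l (σ + τ + π) ρ := by
  rw [mul_assoc, h23 l hlsymm hlcoc (σ + τ) ρ π, ← mul_assoc]

lemma cyc (σ τ ρ π : G) :
    l π σ * l (π + σ) τ * l (π + σ + τ) ρ = l σ τ * l (σ + τ) ρ * l (σ + τ + ρ) π :=
  (s12 l hlsymm hlcoc π σ τ ρ).trans
    ((s23 l hlsymm hlcoc σ π τ ρ).trans (s34 l hlsymm hlcoc σ τ π ρ))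

lemma rhs_scalar (σ τ ρ π : G) :
    l σ ρ * l τ π * l (σ + ρ) (τ + π) = l σ τ * l (σ + τ) ρ * l (σ + τ + ρ) π := by
  rw [mul_assoc, ← hlcoc (σ + ρ) τ π, ← mul_assoc]
  exact s23 l hlsymm hlcoc σ ρ τ π

end Cocycle

section Main

variable {F G A : Type*} [Field F] [AddCommGroup G]
    [NonUnitalNonAssocRing A] [Module F A] [SMulCommClass F A A] [IsScalarTower F A A]
    (l : G → G → F)

lemma conv_single_anticomm (hanti : ∀ x y : A, x * y = -(y * x))
    (hlsymm : ∀ σ τ : G, l σ τ = l τ σ) (σ : G) (x : A) (g : G →₀ A) :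
    conv l (Finsupp.single σ x) g = -(conv l g (Finsupp.single σ x)) := by
  induction g using Finsupp.induction with
  | zero => simp [conv_zero_left, conv_zero_right]
  | single_add τ y g _ _ ih =>
      rw [conv_add_right, conv_add_left, neg_add, ih, conv_single_single,
        conv_single_single, hanti x y, hlsymm σ τ, add_comm σ τ, smul_neg,
        Finsupp.single_neg]

lemma conv_anticomm (hanti : ∀ x y : A, x * y = -(y * x))
    (hlsymm : ∀ σ τ : G, l σ τ = l τ σ) (f g : G →₀ A) :
    conv l f g = -(conv l g f) := by
  induction f using Finsupp.induction with
  | zero => simp [conv_zero_left, conv_zero_right]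
  | single_add σ x f _ _ ih =>
      rw [conv_add_left, conv_add_right, neg_add, ih,
        conv_single_anticomm l hanti hlsymm]

variable (hlsymm : ∀ σ τ : G, l σ τ = l τ σ)
    (hlcoc : ∀ σ τ ρ : G, l σ τ * l (σ + τ) ρ = l τ ρ * l σ (τ + ρ))
    (hsagle : ∀ x y z t : A,
      ((x * y) * z) * t + ((t * x) * y) * z + ((z * t) * x) * y + ((y * z) * t) * x
        = (x * z) * (y * t))
include hlsymm hlcoc hsagle

lemma sagle_single (σ τ ρ π : G) (x y z t : A) :
    conv l (conv l (conv l (Finsupp.single σ x) (Finsupp.single τ y))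
        (Finsupp.single ρ z)) (Finsupp.single π t)
      + conv l (conv l (conv l (Finsupp.single π t) (Finsupp.single σ x))
          (Finsupp.single τ y)) (Finsupp.single ρ z)
      + conv l (conv l (conv l (Finsupp.single ρ z) (Finsupp.single π t))
          (Finsupp.single σ x)) (Finsupp.single τ y)
      + conv l (conv l (conv l (Finsupp.single τ y) (Finsupp.single ρ z))
          (Finsupp.single π t)) (Finsupp.single σ x)
      = conv l (conv l (Finsupp.single σ x) (Finsupp.single ρ z))
          (conv l (Finsupp.single τ y) (Finsupp.single π t)) := by
  have a2 := cyc l hlsymm hlcoc σ τ ρ π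
  have a3 := (cyc l hlsymm hlcoc π σ τ ρ).trans a2
  have a4 := (cyc l hlsymm hlcoc ρ π σ τ).trans a3
  rw [conv_four l σ τ ρ π x y z t, conv_four l π σ τ ρ t x y z,
    conv_four l ρ π σ τ z t x y, conv_four l τ ρ π σ y z t x,
    conv_pair l σ τ ρ π x y z t, a2, a3, a4, rhs_scalar l hlsymm hlcoc σ τ ρ π,
    show π + σ + τ + ρ = σ + τ + ρ + π from by abel,
    show ρ + π + σ + τ = σ + τ + ρ + π from by abel,
    show τ + ρ + π + σ = σ + τ + ρ + π from by abel,
    show σ + ρ + (τ + π) = σ + τ + ρ + π from by abel]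
  simp only [← Finsupp.single_add, ← smul_add]
  rw [hsagle x y z t]

lemma sagle_lift_k (σ τ ρ : G) (x y z : A) (k : G →₀ A) :
    conv l (conv l (conv l (Finsupp.single σ x) (Finsupp.single τ y))
        (Finsupp.single ρ z)) k
      + conv l (conv l (conv l k (Finsupp.single σ x))
          (Finsupp.single τ y)) (Finsupp.single ρ z)
      + conv l (conv l (conv l (Finsupp.single ρ z) k)
          (Finsupp.single σ x)) (Finsupp.single τ y)
      + conv l (conv l (conv l (Finsupp.single τ y) (Finsupp.single ρ z)) k)
          (Finsupp.single σ x)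
      = conv l (conv l (Finsupp.single σ x) (Finsupp.single ρ z))
          (conv l (Finsupp.single τ y) k) := by
  induction k using Finsupp.induction with
  | zero => simp [conv_zero_left, conv_zero_right]
  | single_add π t k _ _ ih =>
      simp only [conv_add_left, conv_add_right]
      rw [← sagle_single l hlsymm hlcoc hsagle σ τ ρ π x y z t, ← ih]
      abel

lemma sagle_lift_h (σ τ : G) (x y : A) (h k : G →₀ A) :
    conv l (conv l (conv l (Finsupp.single σ x) (Finsupp.single τ y)) h) k
      + conv l (conv l (conv l k (Finsupp.single σ x)) (Finsupp.single τ y)) h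
      + conv l (conv l (conv l h k) (Finsupp.single σ x)) (Finsupp.single τ y)
      + conv l (conv l (conv l (Finsupp.single τ y) h) k) (Finsupp.single σ x)
      = conv l (conv l (Finsupp.single σ x) h) (conv l (Finsupp.single τ y) k) := by
  induction h using Finsupp.induction with
  | zero => simp [conv_zero_left, conv_zero_right]
  | single_add ρ z h _ _ ih =>
      simp only [conv_add_left, conv_add_right]
      rw [← sagle_lift_k l hlsymm hlcoc hsagle σ τ ρ x y z k, ← ih]
      abel

lemma sagle_lift_g (σ : G) (x : A) (g h k : G →₀ A) :
    conv l (conv l (conv l (Finsupp.single σ x) g) h) k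
      + conv l (conv l (conv l k (Finsupp.single σ x)) g) h
      + conv l (conv l (conv l h k) (Finsupp.single σ x)) g
      + conv l (conv l (conv l g h) k) (Finsupp.single σ x)
      = conv l (conv l (Finsupp.single σ x) h) (conv l g k) := by
  induction g using Finsupp.induction with
  | zero => simp [conv_zero_left, conv_zero_right]
  | single_add τ y g _ _ ih =>
      simp only [conv_add_left, conv_add_right]
      rw [← sagle_lift_h l hlsymm hlcoc hsagle σ τ x y h k, ← ih]
      abel

lemma sagle_lift (f g h k : G →₀ A) :
    conv l (conv l (conv l f g) h) k + conv l (conv l (conv l k f) g) h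
      + conv l (conv l (conv l h k) f) g + conv l (conv l (conv l g h) k) f
      = conv l (conv l f h) (conv l g k) := by
  induction f using Finsupp.induction with
  | zero => simp [conv_zero_left, conv_zero_right]
  | single_add σ x f _ _ ih =>
      simp only [conv_add_left, conv_add_right]
      rw [← sagle_lift_g l hlsymm hlcoc hsagle σ x g h k, ← ih]
      abel

end Main

/-- If `A` is anticommutative with a symmetric invariant bilinear form,
`G` is a torsion-free abelian group and `λ` a symmetric 2-cocycle with values in `Fˣ`,
then the loop algebra `L(A) = A ⊗ F^t[G]` is anticommutative, and it satisfies the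
Sagle identity (i.e. is a Malcev algebra) whenever `A` does. -/
theorem loop_algebra_malcev {F G A : Type*} [Field F] [CharZero F] [AddCommGroup G]
    [NoZeroSMulDivisors ℤ G]
    [NonUnitalNonAssocRing A] [Module F A] [SMulCommClass F A A] [IsScalarTower F A A]
    (hanti : ∀ x y : A, x * y = -(y * x))
    (B : A →ₗ[F] A →ₗ[F] F)
    (hsymm : ∀ x y : A, B x y = B y x)
    (hinv : ∀ x y z : A, B (x * y) z = B x (y * z))
    (l : G → G → F) (hl : ∀ σ τ : G, l σ τ ≠ 0) (hl0 : l 0 0 = 1)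
    (hlsymm : ∀ σ τ : G, l σ τ = l τ σ)
    (hlcoc : ∀ σ τ ρ : G, l σ τ * l (σ + τ) ρ = l τ ρ * l σ (τ + ρ)) :
    (∀ f g : G →₀ A, conv l f g = -(conv l g f)) ∧
    ((∀ x y z t : A,
        ((x * y) * z) * t + ((t * x) * y) * z + ((z * t) * x) * y + ((y * z) * t) * x
          = (x * z) * (y * t)) →
      ∀ f g h k : G →₀ A,
        conv l (conv l (conv l f g) h) k + conv l (conv l (conv l k f) g) h
          + conv l (conv l (conv l h k) f) g + conv l (conv l (conv l g h) k) f
          = conv l (conv l f h) (conv l g k)) := by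
  exact ⟨conv_anticomm l hanti hlsymm,
    fun hsagle f g h k => sagle_lift l hlsymm hlcoc hsagle f g h k⟩
end

section
/- Let A be an anticommutative algebra over a field of characteristic zero. If A satisfies the Malcev identity, then J(x, y, xy) = 0 for all x, y ∈ A; that is, every Malcev algebra is an extended algebra in the sense of Sagle. -/
/-- Every Malcev algebra over a field of characteristic zero satisfies
`J(x, y, xy) = 0`, i.e. it is an extended algebra in the sense of Sagle. -/
theorem malcev_is_sagle_extended {F A : Type*} [Field F] [CharZero F]
    [NonUnitalNonAssocRing A] [Module F A] [SMulCommClass F A A] [IsScalarTower F A A]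
    (hanti : ∀ x y : A, x * y = -(y * x))
    (hmal : ∀ x y z : A, jac x y (x * z) = (jac x y z) * x) :
    ∀ x y : A, jac x y (x * y) = 0 := by
  have h2 : ∀ a : A, a = -a → a = 0 := by
    intro a h
    have hs : (2 : F) • a = 0 := by
      rw [two_smul]
      rw [eq_neg_iff_add_eq_zero] at h
      exact h
    rcases smul_eq_zero.mp hs with h' | h'
    · exact absurd h' two_ne_zero
    · exact h'
  have hxx : ∀ x : A, x * x = 0 := fun x => h2 _ (hanti x x)
  intro x y
  have h1 : jac y x x = 0 := by
    simp only [jac, hxx, zero_mul, add_zero]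
    rw [hanti x y, neg_mul, add_neg_cancel]
  have h0 := hmal y x x
  rw [h1, zero_mul] at h0
  -- h0 : jac y x (y * x) = 0
  have key : jac x y (x * y) = jac y x (y * x) := by
    simp only [jac, hxx, zero_mul]
    rw [hanti y x]
    rw [neg_mul, mul_neg, hanti x (x*y), neg_neg, ← hanti y (x*y)]
    abel
  rw [key, h0]
end
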